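/- The adjusted Shapley inconsistency value satisfies Rule-Involvement: if the rule-based inconsistency measure I satisfies monotonicity (I(B) ≤ I(B') whenever B ⊆ B') and Rule Consistency, and r ∈ B is a non-fact rule that is not free in B (i.e., r belongs to some minimal inconsistent subset of B), then S*_r^I(B) > 0. -/
import Mathlib


open scoped Classical

/-- A rule over atoms `A`: literals are pairs (atom, sign). -/
structure Rule (A : Type*) where
  body : Finset (A × Bool)
  head : A × Bool
deriving DecidableEq

abbrev RuleBase (A : Type*) := Finset (Rule A)

variable {A : Type*}

/-- The complement of a literal. -/
def litCompl (l : A × Bool) : A × Bool := (l.1, !l.2)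

/-- The fact with head `l` (empty body). -/
def factR (l : A × Bool) : Rule A := ⟨∅, l⟩

/-- The facts (empty-body rules) of a rule base. -/
noncomputable def facts [DecidableEq A] (B : RuleBase A) : RuleBase A :=
  B.filter (fun r => r.body = ∅)

/-- The proper (non-fact) rules of a rule base. -/
noncomputable def properRules [DecidableEq A] (B : RuleBase A) : RuleBase A :=
  B.filter (fun r => r.body ≠ ∅)

/-- A set of literals is closed w.r.t. a rule base. -/
def Closed (B : RuleBase A) (M : Set (A × Bool)) : Prop :=
  ∀ r ∈ B, (↑r.body ⊆ M) → r.head ∈ M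

/-- The minimal model: the smallest closed set of literals. -/
def minModel (B : RuleBase A) : Set (A × Bool) :=
  {l | ∀ M : Set (A × Bool), Closed B M → l ∈ M}

/-- A set of literals is consistent if it contains no complementary pair. -/
def ConsistentLits (M : Set (A × Bool)) : Prop :=
  ¬ ∃ a : A, (a, true) ∈ M ∧ (a, false) ∈ M

/-- A rule base is consistent if its minimal model is consistent. -/
def Consistent (B : RuleBase A) : Prop := ConsistentLits (minModel B)

/-- The minimal inconsistent subsets of a rule base. -/
def MI (B : RuleBase A) : Set (RuleBase A) :=
  { M | M ⊆ B ∧ ¬ Consistent M ∧ ∀ M' ⊂ M, Consistent M' }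

/-- `M` contains a complementary pair of facts. -/
def hasComplFactPair (M : RuleBase A) : Prop :=
  ∃ a : A, factR (a, true) ∈ M ∧ factR (a, false) ∈ M

/-- Minimal inconsistent subsets containing no complementary pair of facts. -/
def MIF (B : RuleBase A) : Set (RuleBase A) :=
  { M ∈ MI B | ¬ hasComplFactPair M }

/-- A formula is free in a rule base if it belongs to no minimal inconsistent subset. -/
def Free (r : Rule A) (B : RuleBase A) : Prop := ∀ M ∈ MI B, r ∉ M

/-- Rule consistency: the rules together with any consistent set of facts are consistent. -/
def RuleConsistent [DecidableEq A] (B : RuleBase A) : Prop :=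
  ∀ F' ⊆ facts B, Consistent F' → Consistent (properRules B ∪ F')

/-- The drastic inconsistency measure. -/
noncomputable def Idr (B : RuleBase A) : ℕ := if Consistent B then 0 else 1

/-- The rule-based drastic inconsistency measure. -/
noncomputable def IRBd (B : RuleBase A) : ℕ := if MIF B = ∅ then 0 else 1

/-- The rule-based MI-inconsistency measure. -/
noncomputable def IRBMI (B : RuleBase A) : ℕ := (MIF B).ncard

/-- The rule-based problematic inconsistency measure: number of distinct
    non-fact rules occurring in some element of `MIF B`. -/
noncomputable def IRBp (B : RuleBase A) : ℕ :=
  {r : Rule A | r.body ≠ ∅ ∧ ∃ M ∈ MIF B, r ∈ M}.ncard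

/-- Three truth values. -/
inductive TV | t | b | f
deriving DecidableEq

def TV.negv : TV → TV
  | .t => .f
  | .f => .t
  | .b => .b

/-- Value of a literal under a three-valued interpretation. -/
def litVal (v : A → TV) (l : A × Bool) : TV :=
  if l.2 then v l.1 else (v l.1).negv

/-- Designated truth values. -/
def TV.des : TV → Prop
  | .f => False
  | _ => True

/-- Three-valued satisfaction of a rule. -/
def sat3 (v : A → TV) (r : Rule A) : Prop :=
  (∀ l ∈ r.body, (litVal v l).des) → (litVal v r.head).des

/-- The rule-based contension inconsistency measure. -/
noncomputable def IRBc (B : RuleBase A) : ℕ :=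
  sInf { n : ℕ | ∃ v : A → TV,
    (∀ M ∈ MIF B, ∀ r ∈ M, sat3 v r) ∧ n = {a : A | v a = TV.b}.ncard }

/-- The payoff of `α` in coalition `C` (w.r.t. rule base `B` and measure `I`). -/
noncomputable def CoalPayoff [DecidableEq A] (I : RuleBase A → ℝ) (B : RuleBase A)
    (α : Rule A) (C : RuleBase A) : ℝ :=
  ((Nat.factorial (C.card - 1) * Nat.factorial (B.card - C.card) : ℕ) : ℝ)
    / ((Nat.factorial B.card : ℕ) : ℝ) * (I C - I (C.erase α))

/-- The additional payoff shifted from facts to non-free rules. -/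
noncomputable def AddPayoff [DecidableEq A] (I : RuleBase A → ℝ) (B : RuleBase A)
    (r : Rule A) (C : RuleBase A) : ℝ :=
  if Free r C then 0
  else (∑ f ∈ C.filter (fun x => x.body = ∅), CoalPayoff I B f C)
        / ((C.filter (fun x => x.body ≠ ∅ ∧ ¬ Free x C)).card : ℝ)

/-- The adjusted Shapley inconsistency value. -/
noncomputable def Sstar [DecidableEq A] (I : RuleBase A → ℝ) (B : RuleBase A)
    (α : Rule A) : ℝ :=
  if α.body = ∅ then 0
  else ∑ C ∈ B.powerset, (CoalPayoff I B α C + AddPayoff I B α C)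

lemma consistent_empty : Consistent (∅ : RuleBase A) := by
  rintro ⟨a, h1, _⟩
  exact h1 ∅ (fun r hr => absurd hr (Finset.notMem_empty r))

lemma ruleConsistent_empty [DecidableEq A] : RuleConsistent (∅ : RuleBase A) := by
  intro F' hF' _
  have hfe : facts (∅ : RuleBase A) = ∅ := by simp [facts]
  have hpe : properRules (∅ : RuleBase A) = ∅ := by simp [properRules]
  rw [hfe] at hF'
  rw [hpe, Finset.subset_empty.mp hF']
  simpa using consistent_empty

lemma fact_mem_minModel [DecidableEq A] {P : RuleBase A} {l : A × Bool}
    (h : factR l ∈ P) : l ∈ minModel (↑P) := by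
  intro M hM
  have := hM (factR l) h (by simp [factR])
  simpa [factR] using this

lemma inconsistent_pair [DecidableEq A] (a : A) :
    ¬ Consistent ({factR (a, true), factR (a, false)} : RuleBase A) := by
  intro hcon
  exact hcon ⟨a, fact_mem_minModel (by simp), fact_mem_minModel (by simp)⟩

/-- facts of a rule base, seen in the minimal model, are heads of facts. -/
lemma minModel_facts_subset [DecidableEq A] (P : RuleBase A) :
    minModel (↑(facts P)) ⊆ {l | ∃ s ∈ facts P, s.head = l} := by
  intro l hl
  exact hl _ (fun s hs _ => ⟨s, hs, rfl⟩)

theorem stmt14 [DecidableEq A] (I : RuleBase A → ℝ) (B : RuleBase A) (r : Rule A)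
    (hMO : ∀ K K' : RuleBase A, K ⊆ K' → I K ≤ I K')
    (hRC : ∀ K : RuleBase A, I K = 0 ↔ RuleConsistent K)
    (hmem : r ∈ B) (hrule : r.body ≠ ∅) (hnotfree : ¬ Free r B) :
    Sstar I B r > 0 := by
  -- I is nonnegative
  have hI0 : I ∅ = 0 := (hRC ∅).mpr ruleConsistent_empty
  have Inonneg : ∀ K, 0 ≤ I K := fun K => hI0 ▸ hMO ∅ K (Finset.empty_subset K)
  -- CoalPayoff is always nonnegative
  have hCP : ∀ (α : Rule A) (C : RuleBase A), 0 ≤ CoalPayoff I B α C := by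
    intro α C
    apply mul_nonneg
    · apply div_nonneg <;> positivity
    · have := hMO (C.erase α) C (Finset.erase_subset α C)
      linarith
  -- AddPayoff is always nonnegative
  have hAP : ∀ (α : Rule A) (C : RuleBase A), 0 ≤ AddPayoff I B α C := by
    intro α C
    unfold AddPayoff
    split
    · exact le_refl _
    · exact div_nonneg (Finset.sum_nonneg fun f _ => hCP f C) (Nat.cast_nonneg _)
  -- obtain a minimal inconsistent subset M containing r
  rw [Free] at hnotfree
  push_neg at hnotfree
  obtain ⟨M, hMmi, hrM⟩ := hnotfree
  obtain ⟨hMB, hMinc, hMmin⟩ := hMmi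
  -- I M > 0 : M is not rule consistent
  have hIM : 0 < I M := by
    rcases lt_or_eq_of_le (Inonneg M) with h | h
    · exact h
    exfalso
    have hrcM : RuleConsistent M := (hRC M).mp h.symm
    -- facts M is consistent
    have hfc : Consistent (facts M) := by
      by_contra hfc
      rw [Consistent, ConsistentLits] at hfc
      push_neg at hfc
      obtain ⟨a, h1, h2⟩ := hfc
      obtain ⟨s1, hs1, hh1⟩ := minModel_facts_subset M h1
      obtain ⟨s2, hs2, hh2⟩ := minModel_facts_subset M h2
      have hb1 : s1.body = ∅ := (Finset.mem_filter.mp hs1).2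
      have hb2 : s2.body = ∅ := (Finset.mem_filter.mp hs2).2
      have he1 : s1 = factR (a, true) := by
        cases s1; simp_all [factR]
      have he2 : s2 = factR (a, false) := by
        cases s2; simp_all [factR]
      have hsubM : ({factR (a, true), factR (a, false)} : RuleBase A) ⊆ M := by
        intro x hx
        rcases Finset.mem_insert.mp hx with h | h
        · exact (Finset.filter_subset _ M) (h ▸ he1 ▸ hs1)
        · have := Finset.mem_singleton.mp h
          exact (Finset.filter_subset _ M) (this ▸ he2 ▸ hs2)
      have hne : ({factR (a, true), factR (a, false)} : RuleBase A) ≠ M := by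
        intro hEq
        have : r ∈ ({factR (a, true), factR (a, false)} : RuleBase A) := hEq ▸ hrM
        rcases Finset.mem_insert.mp this with h | h
        · exact hrule (by rw [h]; rfl)
        · exact hrule (by rw [Finset.mem_singleton.mp h]; rfl)
      exact inconsistent_pair a (hMmin _ (lt_of_le_of_ne hsubM hne))
    -- properRules M ∪ facts M = M
    have hun : properRules M ∪ facts M = M := by
      ext x
      simp only [properRules, facts, Finset.mem_union, Finset.mem_filter]
      tauto
    have := hrcM (facts M) (Finset.Subset.refl _) hfc
    rw [hun] at this
    exact hMinc this
  -- I (M.erase r) = 0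
  have hIMe : I (M.erase r) = 0 := by
    apply (hRC _).mpr
    intro F' hF' _
    apply hMmin
    constructor
    · intro x hx
      rcases Finset.mem_union.mp hx with h | h
      · exact Finset.erase_subset r M ((Finset.filter_subset _ _) h)
      · exact Finset.erase_subset r M ((Finset.filter_subset _ _) (hF' h))
    · intro hsub
      have : r ∈ properRules (M.erase r) ∪ F' := hsub hrM
      rcases Finset.mem_union.mp this with h | h
      · exact (Finset.notMem_erase r M) ((Finset.filter_subset _ _) h)
      · exact (Finset.notMem_erase r M) ((Finset.filter_subset _ _) (hF' h))
  -- the coalition M gives a strictly positive payoff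
  have hMpow : M ∈ B.powerset := Finset.mem_powerset.mpr hMB
  have hCPM : 0 < CoalPayoff I B r M := by
    unfold CoalPayoff
    rw [hIMe]
    apply mul_pos
    · apply div_pos <;> positivity
    · linarith
  rw [Sstar, if_neg hrule]
  apply Finset.sum_pos'
  · intro C _
    exact add_nonneg (hCP r C) (hAP r C)
  · exact ⟨M, hMpow, add_pos_of_pos_of_nonneg hCPM (hAP r M)⟩
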